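/- (PoA_γ ≥ 2 + γ for the English Walrasian mechanism.) Let n = 2 agents and m = 2 items A and B, fix γ > 0 and 0 < ε < 1. Define unit-demand valuations v_1(S) = max_{j∈S} w^1_j with w^1_A = 2−ε, w^1_B = 2/(2+γ), and v_2(S) = max_{j∈S} w^2_j with w^2_A = 2/(2+γ), w^2_B = 2−ε. Define bids b_1(S) = 2(1+γ)/(2+γ) if B ∈ S else 0, and b_2(S) = 2(1+γ)/(2+γ) if A ∈ S else 0. Then for every English Walrasian mechanism with bid space equal to the GS valuations, the profile (b_1, b_2) is a pure Nash equilibrium for (v_1, v_2) in which each bid has exposure factor γ; the equilibrium allocation assigns B to agent 1 and A to agent 2, with welfare ∑_i v_i(X_i(b)) = 4/(2+γ), while OPT(v) = 4 − 2ε. -/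

import Mathlib

open Finset

/-- A valuation on `m` items: normalized at `∅`, monotone, nonnegative. -/
def IsValuation {m : ℕ} (v : Finset (Fin m) → ℝ) : Prop :=
  v ∅ = 0 ∧ (∀ S T : Finset (Fin m), S ⊆ T → v S ≤ v T) ∧ (∀ S, 0 ≤ v S)

/-- `S` is in the demand set of valuation `v` at prices `p`. -/
def InDemand {m : ℕ} (v : Finset (Fin m) → ℝ) (p : Fin m → ℝ) (S : Finset (Fin m)) : Prop :=
  ∀ T : Finset (Fin m), v T - ∑ j ∈ T, p j ≤ v S - ∑ j ∈ S, p j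

/-- Gross substitutes valuations. -/
def IsGS {m : ℕ} (v : Finset (Fin m) → ℝ) : Prop :=
  IsValuation v ∧
    ∀ p q : Fin m → ℝ, (∀ j, p j ≤ q j) →
      ∀ S : Finset (Fin m), InDemand v p S →
        ∃ T : Finset (Fin m), InDemand v q T ∧ ∀ j ∈ S, p j = q j → j ∈ T

/-- Additive valuations. -/
def IsAdditive {m : ℕ} (v : Finset (Fin m) → ℝ) : Prop :=
  ∃ w : Fin m → ℝ, (∀ j, 0 ≤ w j) ∧ ∀ S : Finset (Fin m), v S = ∑ j ∈ S, w j

/-- XOS valuations: a max over a nonempty finite family of nonnegative additive valuations. -/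
def IsXOS {m : ℕ} (v : Finset (Fin m) → ℝ) : Prop :=
  ∃ (k : ℕ) (w : Fin (k + 1) → Fin m → ℝ),
    (∀ i j, 0 ≤ w i j) ∧
    ∀ S : Finset (Fin m),
      v S = Finset.univ.sup' Finset.univ_nonempty (fun i => ∑ j ∈ S, w i j)

def GSvals (m : ℕ) : Set (Finset (Fin m) → ℝ) := {u | IsGS u}
def XOSvals (m : ℕ) : Set (Finset (Fin m) → ℝ) := {u | IsXOS u}

/-- The welfare `W^b(S)`: the maximum of `∑ i, b i (X i)` over allocations (pairwise disjoint
tuples of subsets) contained in `S`. -/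
noncomputable def W {n m : ℕ} (b : Fin n → Finset (Fin m) → ℝ) (S : Finset (Fin m)) : ℝ :=
  sSup {t : ℝ | ∃ X : Fin n → Finset (Fin m),
    (∀ i j : Fin n, i ≠ j → Disjoint (X i) (X j)) ∧ (∀ i, X i ⊆ S) ∧ t = ∑ i, b i (X i)}

/-- The welfare `W^{b₋ᵢ}(S)` with agent `i` omitted. -/
noncomputable def Wminus {n m : ℕ} (b : Fin n → Finset (Fin m) → ℝ) (i : Fin n)
    (S : Finset (Fin m)) : ℝ :=
  sSup {t : ℝ | ∃ X : Fin n → Finset (Fin m),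
    (∀ k l : Fin n, k ≠ l → Disjoint (X k) (X l)) ∧ (∀ k, X k ⊆ S) ∧
    t = ∑ k ∈ Finset.univ.erase i, b k (X k)}

/-- The welfare `W^b(x)` for a multiplicity vector `x : Fin m → ℕ`: maximum of `∑ i, b i (X i)`
over tuples of sets in which each item `j` is used at most `x j` times. -/
noncomputable def Wmult {n m : ℕ} (b : Fin n → Finset (Fin m) → ℝ) (x : Fin m → ℕ) : ℝ :=
  sSup {t : ℝ | ∃ X : Fin n → Finset (Fin m),
    (∀ j : Fin m, (Finset.univ.filter fun i => j ∈ X i).card ≤ x j) ∧ t = ∑ i, b i (X i)}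

/-- The optimal welfare for the true valuations. -/
noncomputable def OPT {n m : ℕ} (v : Fin n → Finset (Fin m) → ℝ) : ℝ := W v Finset.univ

/-- A mechanism: allocation and payment maps on bid profiles. -/
structure Mechanism (n m : ℕ) where
  alloc : (Fin n → Finset (Fin m) → ℝ) → Fin n → Finset (Fin m)
  pay : (Fin n → Finset (Fin m) → ℝ) → Fin n → ℝ

/-- A bid profile lies in the bid space `B`. -/
def InBidSpace {n m : ℕ} (B : Set (Finset (Fin m) → ℝ))
    (b : Fin n → Finset (Fin m) → ℝ) : Prop :=
  ∀ i, b i ∈ B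

/-- On bid profiles from `B`, the allocation is pairwise disjoint. -/
def AllocDisjoint {n m : ℕ} (M : Mechanism n m) (B : Set (Finset (Fin m) → ℝ)) : Prop :=
  ∀ b, InBidSpace B b → ∀ i j : Fin n, i ≠ j → Disjoint (M.alloc b i) (M.alloc b j)

/-- On bid profiles from `B`, payments are nonnegative. -/
def PayNonneg {n m : ℕ} (M : Mechanism n m) (B : Set (Finset (Fin m) → ℝ)) : Prop :=
  ∀ b, InBidSpace B b → ∀ i, 0 ≤ M.pay b i

/-- The utility of agent `i` with true valuation `v` under bid profile `b`. -/
noncomputable def util {n m : ℕ} (M : Mechanism n m) (v : Finset (Fin m) → ℝ) (i : Fin n)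
    (b : Fin n → Finset (Fin m) → ℝ) : ℝ :=
  v (M.alloc b i) - M.pay b i

/-- Declared welfare maximizer. -/
def IsDWM {n m : ℕ} (M : Mechanism n m) (B : Set (Finset (Fin m) → ℝ)) : Prop :=
  (∀ b, InBidSpace B b → ∑ i, b i (M.alloc b i) = W b Finset.univ) ∧
  (∀ b, InBidSpace B b → ∀ i, M.pay b i ≤ b i (M.alloc b i)) ∧
  (∀ b, InBidSpace B b → ∀ i : Fin n, ∃ b' : Fin n → Finset (Fin m) → ℝ,
    InBidSpace B b' ∧ b' i = b i ∧ M.alloc b' i = M.alloc b i ∧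
    M.pay b' i = b i (M.alloc b i))

/-- English Walrasian mechanism: welfare-maximizing allocation w.r.t. the bids, with
payments given by the minimum Walrasian prices `W^b(𝟙 + e_j) − W^b(𝟙)`. -/
def IsEnglish {n m : ℕ} (M : Mechanism n m) (B : Set (Finset (Fin m) → ℝ)) : Prop :=
  (∀ b, InBidSpace B b → ∑ i, b i (M.alloc b i) = W b Finset.univ) ∧
  (∀ b, InBidSpace B b → ∀ i, M.pay b i =
    ∑ j ∈ M.alloc b i,
      (Wmult b (fun k => if k = j then 2 else 1) - Wmult b (fun _ => 1)))

/-- VCG mechanism: welfare-maximizing allocation w.r.t. the bids, with externality payments. -/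
def IsVCG {n m : ℕ} (M : Mechanism n m) (B : Set (Finset (Fin m) → ℝ)) : Prop :=
  (∀ b, InBidSpace B b → ∑ i, b i (M.alloc b i) = W b Finset.univ) ∧
  (∀ b, InBidSpace B b → ∀ i, M.pay b i =
    Wminus b i Finset.univ - Wminus b i (Finset.univ \ M.alloc b i))

/-- Bid `bi` of agent `i` with true valuation `v` has exposure factor `γ`. -/
def HasExposureFactor {n m : ℕ} (M : Mechanism n m) (B : Set (Finset (Fin m) → ℝ))
    (v : Finset (Fin m) → ℝ) (i : Fin n) (bi : Finset (Fin m) → ℝ) (γ : ℝ) : Prop :=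
  ∀ b : Fin n → Finset (Fin m) → ℝ, InBidSpace B b → b i = bi →
    M.pay b i ≤ (1 + γ) * v (M.alloc b i)

/-- `b` is a pure Nash equilibrium for true valuations `v`. -/
noncomputable def IsNash {n m : ℕ} (M : Mechanism n m) (B : Set (Finset (Fin m) → ℝ))
    (v b : Fin n → Finset (Fin m) → ℝ) : Prop :=
  InBidSpace B b ∧
  ∀ i : Fin n, ∀ bi' ∈ B, util M (v i) i (Function.update b i bi') ≤ util M (v i) i b

/-- A finitely supported probability distribution. -/
structure FinDist (α : Type*) where
  supp : Finset α
  μ : α → ℝ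
  nonneg : ∀ a, 0 ≤ μ a
  sum_one : ∑ a ∈ supp, μ a = 1

/-- Expectation of `f` under a finitely supported distribution. -/
noncomputable def FinDist.exp {α : Type*} (D : FinDist α) (f : α → ℝ) : ℝ :=
  ∑ a ∈ D.supp, D.μ a * f a

/-- Bayes-Nash equilibrium: strategies map types in `V` to bids in `B`, and no unilateral
deviation (depending only on the agent's own type) improves expected utility. -/
noncomputable def IsBNE {n m : ℕ} (M : Mechanism n m) (V B : Set (Finset (Fin m) → ℝ))
    (D : FinDist (Fin n → Finset (Fin m) → ℝ))
    (s : Fin n → (Finset (Fin m) → ℝ) → Finset (Fin m) → ℝ) : Prop :=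
  (∀ i : Fin n, ∀ vi ∈ V, s i vi ∈ B) ∧
  ∀ i : Fin n, ∀ s' : (Finset (Fin m) → ℝ) → Finset (Fin m) → ℝ, (∀ vi ∈ V, s' vi ∈ B) →
    D.exp (fun v => util M (v i) i (Function.update (fun k => s k (v k)) i (s' (v i)))) ≤
    D.exp (fun v => util M (v i) i (fun k => s k (v k)))

/-- Strategy `si` of agent `i` has exposure factor `γ` under distribution `D`. -/
noncomputable def BayesExposure {n m : ℕ} (M : Mechanism n m)
    (V B : Set (Finset (Fin m) → ℝ)) (D : FinDist (Fin n → Finset (Fin m) → ℝ)) (i : Fin n)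
    (si : (Finset (Fin m) → ℝ) → Finset (Fin m) → ℝ) (γ : ℝ) : Prop :=
  ∀ c : (Finset (Fin m) → ℝ) → Fin n → Finset (Fin m) → ℝ,
    (∀ vi ∈ V, InBidSpace B (c vi) ∧ c vi i = si vi) →
    D.exp (fun v => M.pay (c (v i)) i) ≤
      (1 + γ) * D.exp (fun v => (v i) (M.alloc (c (v i)) i))

/-- A unit-demand valuation with weight vector `w`. -/
noncomputable def unitDemand {m : ℕ} (w : Fin m → ℝ) : Finset (Fin m) → ℝ :=
  fun S => if h : S.Nonempty then S.sup' h w else 0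

/-- Bid of agent 1: 2(1+γ)/(2+γ) on sets containing item B (index 1), else 0. -/
noncomputable def gB1 (γ : ℝ) : Finset (Fin 2) → ℝ :=
  fun S => if (1 : Fin 2) ∈ S then 2 * (1 + γ) / (2 + γ) else 0

/-- Bid of agent 2: 2(1+γ)/(2+γ) on sets containing item A (index 0), else 0. -/
noncomputable def gB2 (γ : ℝ) : Finset (Fin 2) → ℝ :=
  fun S => if (0 : Fin 2) ∈ S then 2 * (1 + γ) / (2 + γ) else 0


section AuxLemmas

lemma fin2_or (x : Fin 2) : x = 0 ∨ x = 1 := by omega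

lemma card_filter_fin2 (P : Fin 2 → Prop) [DecidablePred P] :
    (Finset.univ.filter P).card = (if P 0 then 1 else 0) + (if P 1 then 1 else 0) := by
  rw [Finset.card_filter, Fin.sum_univ_two]

lemma W_set_finite {n m : ℕ} (b : Fin n → Finset (Fin m) → ℝ) (S : Finset (Fin m)) :
    {t : ℝ | ∃ X : Fin n → Finset (Fin m),
      (∀ i j : Fin n, i ≠ j → Disjoint (X i) (X j)) ∧ (∀ i, X i ⊆ S) ∧
      t = ∑ i, b i (X i)}.Finite := by
  apply Set.Finite.subset (Set.finite_range fun X : Fin n → Finset (Fin m) => ∑ i, b i (X i))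
  rintro t ⟨X, -, -, rfl⟩
  exact ⟨X, rfl⟩

lemma Wmult_set_finite {n m : ℕ} (b : Fin n → Finset (Fin m) → ℝ) (x : Fin m → ℕ) :
    {t : ℝ | ∃ X : Fin n → Finset (Fin m),
      (∀ j : Fin m, (Finset.univ.filter fun i => j ∈ X i).card ≤ x j) ∧
      t = ∑ i, b i (X i)}.Finite := by
  apply Set.Finite.subset (Set.finite_range fun X : Fin n → Finset (Fin m) => ∑ i, b i (X i))
  rintro t ⟨X, -, rfl⟩
  exact ⟨X, rfl⟩

lemma le_W {n m : ℕ} (b : Fin n → Finset (Fin m) → ℝ) (S : Finset (Fin m))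
    (X : Fin n → Finset (Fin m)) (h1 : ∀ i j : Fin n, i ≠ j → Disjoint (X i) (X j))
    (h2 : ∀ i, X i ⊆ S) : ∑ i, b i (X i) ≤ W b S :=
  le_csSup (W_set_finite b S).bddAbove ⟨X, h1, h2, rfl⟩

lemma W_le {n m : ℕ} (b : Fin n → Finset (Fin m) → ℝ) (S : Finset (Fin m)) (a : ℝ)
    (h : ∀ X : Fin n → Finset (Fin m), (∀ i j : Fin n, i ≠ j → Disjoint (X i) (X j)) →
      (∀ i, X i ⊆ S) → ∑ i, b i (X i) ≤ a) : W b S ≤ a := by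
  apply csSup_le
  · exact ⟨∑ i, b i ((fun _ => ∅) i), fun _ => ∅, fun i j _ => by simp, fun i => by simp, rfl⟩
  · rintro t ⟨X, h1, h2, rfl⟩
    exact h X h1 h2

lemma le_Wmult {n m : ℕ} (b : Fin n → Finset (Fin m) → ℝ) (x : Fin m → ℕ)
    (X : Fin n → Finset (Fin m))
    (h : ∀ j : Fin m, (Finset.univ.filter fun i => j ∈ X i).card ≤ x j) :
    ∑ i, b i (X i) ≤ Wmult b x :=
  le_csSup (Wmult_set_finite b x).bddAbove ⟨X, h, rfl⟩

lemma Wmult_le {n m : ℕ} (b : Fin n → Finset (Fin m) → ℝ) (x : Fin m → ℕ) (a : ℝ)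
    (h : ∀ X : Fin n → Finset (Fin m),
      (∀ j : Fin m, (Finset.univ.filter fun i => j ∈ X i).card ≤ x j) →
      ∑ i, b i (X i) ≤ a) : Wmult b x ≤ a := by
  apply csSup_le
  · exact ⟨∑ i, b i ((fun _ => ∅) i), fun _ => ∅, fun j => by simp, rfl⟩
  · rintro t ⟨X, h1, rfl⟩
    exact h X h1

lemma Wmult_mono {n m : ℕ} (b : Fin n → Finset (Fin m) → ℝ) (x y : Fin m → ℕ)
    (hxy : ∀ j, x j ≤ y j) : Wmult b x ≤ Wmult b y := by
  apply Wmult_le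
  intro X hX
  exact le_Wmult b y X fun j => (hX j).trans (hxy j)

lemma additive_isGS {m : ℕ} {v : Finset (Fin m) → ℝ} (h : IsAdditive v) : IsGS v := by
  obtain ⟨w, hw, hv⟩ := h
  constructor
  · refine ⟨by simp [hv], ?_, ?_⟩
    · intro S T hST
      rw [hv, hv]
      exact Finset.sum_le_sum_of_subset_of_nonneg hST fun j _ _ => hw j
    · intro S
      rw [hv]
      exact Finset.sum_nonneg fun j _ => hw j
  · intro p q hpq S hS
    have hSp : ∀ j ∈ S, p j ≤ w j := by
      intro j hj
      have := hS (S.erase j)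
      rw [hv, hv, Finset.sum_erase_eq_sub hj, Finset.sum_erase_eq_sub hj] at this
      linarith
    refine ⟨Finset.univ.filter fun j => q j < w j ∨ (j ∈ S ∧ p j = q j), ?_, ?_⟩
    · intro U
      rw [hv, hv, ← Finset.sum_sub_distrib, ← Finset.sum_sub_distrib]
      have key : ∀ T : Finset (Fin m),
          ∑ j ∈ T, (w j - q j) ≤ ∑ j ∈ T.filter (fun j => 0 < w j - q j), (w j - q j) := by
        intro T
        rw [← Finset.sum_filter_add_sum_filter_not T (fun j => 0 < w j - q j)]
        have : ∑ j ∈ T.filter (fun j => ¬ 0 < w j - q j), (w j - q j) ≤ 0 :=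
          Finset.sum_nonpos fun j hj => by
            have := (Finset.mem_filter.mp hj).2; linarith
        linarith
      calc ∑ j ∈ U, (w j - q j) ≤ ∑ j ∈ U.filter (fun j => 0 < w j - q j), (w j - q j) := key U
        _ ≤ ∑ j ∈ Finset.univ.filter (fun j => 0 < w j - q j), (w j - q j) := by
            apply Finset.sum_le_sum_of_subset_of_nonneg
            · exact Finset.filter_subset_filter _ (Finset.subset_univ U)
            · intro j hj _
              have := (Finset.mem_filter.mp hj).2; linarith
        _ ≤ ∑ j ∈ Finset.univ.filter (fun j => q j < w j ∨ (j ∈ S ∧ p j = q j)), (w j - q j) := by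
            apply Finset.sum_le_sum_of_subset_of_nonneg
            · intro j hj
              simp only [Finset.mem_filter, Finset.mem_univ, true_and] at hj ⊢
              exact Or.inl (by linarith)
            · intro j hj _
              rcases (Finset.mem_filter.mp hj).2 with h1 | ⟨h1, h2⟩
              · linarith
              · have := hSp j h1; linarith [hpq j]
    · intro j hj hpq'
      simp only [Finset.mem_filter, Finset.mem_univ, true_and]
      exact Or.inr ⟨hj, hpq'⟩

lemma unitDemand_empty {m : ℕ} (w : Fin m → ℝ) : unitDemand w ∅ = 0 := by
  simp [unitDemand]

lemma unitDemand_singleton {m : ℕ} (w : Fin m → ℝ) (j : Fin m) :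
    unitDemand w {j} = w j := by
  simp [unitDemand]

lemma le_unitDemand {m : ℕ} (w : Fin m → ℝ) {S : Finset (Fin m)} {j : Fin m} (hj : j ∈ S) :
    w j ≤ unitDemand w S := by
  rw [unitDemand, dif_pos ⟨j, hj⟩]
  exact Finset.le_sup' w hj

lemma unitDemand_le {m : ℕ} (w : Fin m → ℝ) (S : Finset (Fin m)) (a : ℝ) (h0 : 0 ≤ a)
    (hw : ∀ j ∈ S, w j ≤ a) : unitDemand w S ≤ a := by
  rw [unitDemand]
  split
  · exact Finset.sup'_le _ _ hw
  · exact h0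

lemma unitDemand_nonneg {m : ℕ} (w : Fin m → ℝ) (hw : ∀ j, 0 ≤ w j)
    (S : Finset (Fin m)) : 0 ≤ unitDemand w S := by
  rw [unitDemand]
  split
  · next h => exact le_trans (hw h.choose) (Finset.le_sup' w h.choose_spec)
  · exact le_refl 0

end AuxLemmas

section Aux2

lemma mult_disj {m : ℕ} (X : Fin 2 → Finset (Fin m))
    (hX : ∀ j : Fin m, (Finset.univ.filter fun i => j ∈ X i).card ≤ 1) :
    Disjoint (X 0) (X 1) := by
  rw [Finset.disjoint_left]
  intro j hj0 hj1
  have := hX j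
  rw [card_filter_fin2] at this
  rw [if_pos hj0, if_pos hj1] at this
  omega

lemma disj2 {m : ℕ} (X : Fin 2 → Finset (Fin m)) (h : Disjoint (X 0) (X 1)) :
    ∀ i j : Fin 2, i ≠ j → Disjoint (X i) (X j) := by
  intro i j hij
  rcases fin2_or i with rfl | rfl <;> rcases fin2_or j with rfl | rfl <;>
    first | exact absurd rfl hij | exact h | exact h.symm

lemma Wmult_one_le_W {m : ℕ} (b : Fin 2 → Finset (Fin m) → ℝ) :
    Wmult b (fun _ => 1) ≤ W b Finset.univ := by
  apply Wmult_le
  intro X hX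
  exact le_W b Finset.univ X (disj2 X (mult_disj X hX)) fun i => Finset.subset_univ _

end Aux2
set_option maxHeartbeats 400000 in
/-- PoA_γ ≥ 2 + γ for the English Walrasian mechanism: with unit-demand
valuations w¹ = (2−ε, 2/(2+γ)), w² = (2/(2+γ), 2−ε) (item A is index 0, item B index 1)
and the bids gB1 γ, gB2 γ, the bid profile is a pure Nash equilibrium of every English
Walrasian mechanism on the GS bid space in which each bid has exposure factor γ; the
allocation gives B to agent 1 and A to agent 2, with welfare 4/(2+γ), while OPT = 4 − 2ε. -/
theorem stmt16 (γ : ℝ) (hγ : 0 < γ) (ε : ℝ) (hε : 0 < ε) (hε1 : ε < 1) :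
    ∀ M : Mechanism 2 2,
      AllocDisjoint M (GSvals 2) → PayNonneg M (GSvals 2) → IsEnglish M (GSvals 2) →
        IsNash M (GSvals 2)
          ![unitDemand ![2 - ε, 2 / (2 + γ)], unitDemand ![2 / (2 + γ), 2 - ε]]
          ![gB1 γ, gB2 γ] ∧
        (∀ i : Fin 2,
          HasExposureFactor M (GSvals 2)
            (![unitDemand ![2 - ε, 2 / (2 + γ)], unitDemand ![2 / (2 + γ), 2 - ε]] i) i
            (![gB1 γ, gB2 γ] i) γ) ∧
        M.alloc ![gB1 γ, gB2 γ] 0 = {1} ∧ M.alloc ![gB1 γ, gB2 γ] 1 = {0} ∧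
        (∑ i, ![unitDemand ![2 - ε, 2 / (2 + γ)], unitDemand ![2 / (2 + γ), 2 - ε]] i
            (M.alloc ![gB1 γ, gB2 γ] i)) = 4 / (2 + γ) ∧
        OPT ![unitDemand ![2 - ε, 2 / (2 + γ)], unitDemand ![2 / (2 + γ), 2 - ε]] =
          4 - 2 * ε := by
  intro M hdisj hpayn hEng
  obtain ⟨hWmax, hPay⟩ := hEng
  set d : ℝ := 2 / (2 + γ) with hd_def
  set c : ℝ := 2 * (1 + γ) / (2 + γ) with hc_def
  have h2γ : (0:ℝ) < 2 + γ := by linarith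
  have hd0 : 0 < d := by rw [hd_def]; positivity
  have hd1 : d < 1 := by rw [hd_def, div_lt_one h2γ]; linarith
  have hc0 : 0 < c := by rw [hc_def]; positivity
  have hcd : c + d = 2 := by rw [hc_def, hd_def]; field_simp; ring
  have hcid : c = (1 + γ) * d := by rw [hc_def, hd_def]; field_simp
  have gB1_mem : ∀ S : Finset (Fin 2), (1:Fin 2) ∈ S → gB1 γ S = c := by
    intro S h; unfold gB1; rw [if_pos h, hc_def]
  have gB1_not : ∀ S : Finset (Fin 2), (1:Fin 2) ∉ S → gB1 γ S = 0 := by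
    intro S h; unfold gB1; rw [if_neg h]
  have gB2_mem : ∀ S : Finset (Fin 2), (0:Fin 2) ∈ S → gB2 γ S = c := by
    intro S h; unfold gB2; rw [if_pos h, hc_def]
  have gB2_not : ∀ S : Finset (Fin 2), (0:Fin 2) ∉ S → gB2 γ S = 0 := by
    intro S h; unfold gB2; rw [if_neg h]
  have gB1_le : ∀ S : Finset (Fin 2), gB1 γ S ≤ c := by
    intro S
    by_cases h : (1:Fin 2) ∈ S
    · rw [gB1_mem S h]
    · rw [gB1_not S h]; exact hc0.le
  have gB2_le : ∀ S : Finset (Fin 2), gB2 γ S ≤ c := by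
    intro S
    by_cases h : (0:Fin 2) ∈ S
    · rw [gB2_mem S h]
    · rw [gB2_not S h]; exact hc0.le
  have gB1_erase0 : ∀ S : Finset (Fin 2), gB1 γ (S.erase 0) = gB1 γ S := by
    intro S; unfold gB1
    by_cases h1 : (1:Fin 2) ∈ S
    · rw [if_pos h1, if_pos (Finset.mem_erase.mpr ⟨by decide, h1⟩)]
    · rw [if_neg h1, if_neg fun hc => h1 (Finset.mem_of_mem_erase hc)]
  have gB2_erase1 : ∀ S : Finset (Fin 2), gB2 γ (S.erase 1) = gB2 γ S := by
    intro S; unfold gB2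
    by_cases h0 : (0:Fin 2) ∈ S
    · rw [if_pos h0, if_pos (Finset.mem_erase.mpr ⟨by decide, h0⟩)]
    · rw [if_neg h0, if_neg fun hc => h0 (Finset.mem_of_mem_erase hc)]
  have hgb1 : gB1 γ ∈ GSvals 2 := by
    apply additive_isGS
    refine ⟨fun j => if j = 1 then c else 0, fun j => ?_, fun S => ?_⟩
    · dsimp only; split
      · exact hc0.le
      · exact le_refl 0
    · rw [Finset.sum_ite_eq' S 1 fun _ => c]
      unfold gB1; rw [hc_def]
  have hgb2 : gB2 γ ∈ GSvals 2 := by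
    apply additive_isGS
    refine ⟨fun j => if j = 0 then c else 0, fun j => ?_, fun S => ?_⟩
    · dsimp only; split
      · exact hc0.le
      · exact le_refl 0
    · rw [Finset.sum_ite_eq' S 0 fun _ => c]
      unfold gB2; rw [hc_def]
  have hbB : InBidSpace (GSvals 2) ![gB1 γ, gB2 γ] := by
    intro i
    rcases fin2_or i with rfl | rfl
    · simpa using hgb1
    · simpa using hgb2
  have hWb : W ![gB1 γ, gB2 γ] Finset.univ = c + c := by
    apply le_antisymm
    · apply W_le
      intro X _ _
      rw [Fin.sum_univ_two]
      simp only [Matrix.cons_val_zero, Matrix.cons_val_one, Matrix.head_cons]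
      exact add_le_add (gB1_le _) (gB2_le _)
    · have h := le_W ![gB1 γ, gB2 γ] Finset.univ ![{1}, {0}]
        (disj2 _ (by simp)) fun i => Finset.subset_univ _
      rw [Fin.sum_univ_two] at h
      simp only [Matrix.cons_val_zero, Matrix.cons_val_one, Matrix.head_cons] at h
      rw [gB1_mem _ (Finset.mem_singleton_self 1), gB2_mem _ (Finset.mem_singleton_self 0)] at h
      exact h
  have hWmultb : ∀ x : Fin 2 → ℕ, (∀ j, 1 ≤ x j) → Wmult ![gB1 γ, gB2 γ] x = c + c := by
    intro x hx
    apply le_antisymm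
    · apply Wmult_le
      intro X _
      rw [Fin.sum_univ_two]
      simp only [Matrix.cons_val_zero, Matrix.cons_val_one, Matrix.head_cons]
      exact add_le_add (gB1_le _) (gB2_le _)
    · have h := le_Wmult ![gB1 γ, gB2 γ] x ![{1}, {0}] ?_
      · rw [Fin.sum_univ_two] at h
        simp only [Matrix.cons_val_zero, Matrix.cons_val_one, Matrix.head_cons] at h
        rw [gB1_mem _ (Finset.mem_singleton_self 1), gB2_mem _ (Finset.mem_singleton_self 0)] at h
        exact h
      · intro j
        rw [card_filter_fin2]
        have := hx j
        rcases fin2_or j with rfl | rfl <;>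
          simp only [Matrix.cons_val_zero, Matrix.cons_val_one, Matrix.head_cons,
            Finset.mem_singleton] <;>
          split_ifs <;> omega
  have hpayb : ∀ i : Fin 2, M.pay ![gB1 γ, gB2 γ] i = 0 := by
    intro i
    rw [hPay _ hbB i]
    apply Finset.sum_eq_zero
    intro j _
    rw [hWmultb _ fun k => by by_cases h : k = j <;> simp [h],
      hWmultb _ fun k => le_refl 1, sub_self]
  have halloc : M.alloc ![gB1 γ, gB2 γ] 0 = {1} ∧ M.alloc ![gB1 γ, gB2 γ] 1 = {0} := by
    have hs := hWmax _ hbB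
    rw [hWb, Fin.sum_univ_two] at hs
    simp only [Matrix.cons_val_zero, Matrix.cons_val_one, Matrix.head_cons] at hs
    have h1 : (1:Fin 2) ∈ M.alloc ![gB1 γ, gB2 γ] 0 := by
      by_contra h
      rw [gB1_not _ h] at hs
      have := gB2_le (M.alloc ![gB1 γ, gB2 γ] 1)
      linarith
    have h0 : (0:Fin 2) ∈ M.alloc ![gB1 γ, gB2 γ] 1 := by
      by_contra h
      rw [gB2_not _ h] at hs
      have := gB1_le (M.alloc ![gB1 γ, gB2 γ] 0)
      linarith
    have hdis : Disjoint (M.alloc ![gB1 γ, gB2 γ] 0) (M.alloc ![gB1 γ, gB2 γ] 1) :=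
      hdisj _ hbB 0 1 (by decide)
    constructor
    · ext x
      simp only [Finset.mem_singleton]
      constructor
      · intro hx
        rcases fin2_or x with rfl | rfl
        · exact absurd h0 (Finset.disjoint_left.mp hdis hx)
        · rfl
      · rintro rfl; exact h1
    · ext x
      simp only [Finset.mem_singleton]
      constructor
      · intro hx
        rcases fin2_or x with rfl | rfl
        · rfl
        · exact absurd h1 (Finset.disjoint_right.mp hdis hx)
      · rintro rfl; exact h0
  refine ⟨⟨hbB, ?_⟩, ?_, halloc.1, halloc.2, ?_, ?_⟩
  · -- Nash
    intro i bi' hbi'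
    rcases fin2_or i with rfl | rfl
    · -- deviation of agent 0
      set b' := Function.update ![gB1 γ, gB2 γ] 0 bi' with hb'
      have hb'0 : b' 0 = bi' := by rw [hb']; simp
      have hb'1 : b' 1 = gB2 γ := by
        rw [hb', Function.update_of_ne (by decide)]
        simp
      have hb'B : InBidSpace (GSvals 2) b' := by
        intro k
        rcases fin2_or k with rfl | rfl
        · rw [hb'0]; exact hbi'
        · rw [hb'1]; exact hgb2
      have hutil_b :
          util M (![unitDemand ![2 - ε, d], unitDemand ![d, 2 - ε]] 0) 0 ![gB1 γ, gB2 γ] = d := by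
        unfold util
        rw [halloc.1, hpayb]
        simp only [Matrix.cons_val_zero]
        rw [unitDemand_singleton]
        simp
      rw [hutil_b]
      set X := M.alloc b' 0 with hXdef
      have hXY : Disjoint X (M.alloc b' 1) := hdisj b' hb'B 0 1 (by decide)
      have hpays := hPay b' hb'B 0
      have hprice_nonneg : ∀ j : Fin 2,
          0 ≤ Wmult b' (fun k => if k = j then 2 else 1) - Wmult b' (fun _ => 1) := by
        intro j
        have := Wmult_mono b' (fun _ => 1) (fun k => if k = j then 2 else 1)
          (fun k => by by_cases h : k = j <;> simp [h])
        linarith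
      unfold util
      simp only [Matrix.cons_val_zero]
      by_cases h0X : (0:Fin 2) ∈ X
      · have hWsum := hWmax b' hb'B
        rw [Fin.sum_univ_two, hb'0, hb'1] at hWsum
        have h0Y : (0:Fin 2) ∉ M.alloc b' 1 := Finset.disjoint_left.mp hXY h0X
        rw [gB2_not _ h0Y] at hWsum
        have hup : Wmult b' (fun _ => 1) ≤ bi' X := by
          have h := Wmult_one_le_W b'
          rw [← hWsum] at h
          rw [← hXdef] at h
          linarith
        have hlo : bi' X + c ≤ Wmult b' (fun k => if k = 0 then 2 else 1) := by
          have h := le_Wmult b' (fun k => if k = 0 then 2 else 1) ![X, {0}] ?_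
          · rw [Fin.sum_univ_two] at h
            simp only [Matrix.cons_val_zero, Matrix.cons_val_one, Matrix.head_cons] at h
            rw [hb'0, hb'1, gB2_mem _ (Finset.mem_singleton_self 0)] at h
            exact h
          · intro j
            rw [card_filter_fin2]
            simp only [Matrix.cons_val_zero, Matrix.cons_val_one, Matrix.head_cons]
            rcases fin2_or j with rfl | rfl <;>
              simp [h0X, Finset.mem_singleton] <;> split_ifs <;> simp_all
        have hpay_ge : c ≤ M.pay b' 0 := by
          rw [hpays]
          have hsingle := Finset.single_le_sum
            (f := fun j => Wmult b' (fun k => if k = j then 2 else 1) - Wmult b' (fun _ => 1))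
            (fun j _ => hprice_nonneg j) h0X
          have hc0' : c ≤ Wmult b' (fun k => if k = 0 then 2 else 1) - Wmult b' (fun _ => 1) := by
            linarith
          rw [← hXdef]
          linarith
        have hvX : unitDemand ![2 - ε, d] X ≤ 2 - ε := by
          apply unitDemand_le _ _ _ (by linarith)
          intro j _
          rcases fin2_or j with rfl | rfl <;>
            simp only [Matrix.cons_val_zero, Matrix.cons_val_one, Matrix.head_cons] <;> linarith
        rw [← hXdef]
        linarith
      · have hvX : unitDemand ![2 - ε, d] X ≤ d := by
          apply unitDemand_le _ _ _ hd0.le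
          intro j hj
          rcases fin2_or j with rfl | rfl
          · exact absurd hj h0X
          · simp
        have hpay_ge : 0 ≤ M.pay b' 0 := by
          rw [hpays]
          exact Finset.sum_nonneg fun j _ => hprice_nonneg j
        rw [← hXdef]
        linarith
    · -- deviation of agent 1
      set b' := Function.update ![gB1 γ, gB2 γ] 1 bi' with hb'
      have hb'1 : b' 1 = bi' := by rw [hb']; simp
      have hb'0 : b' 0 = gB1 γ := by
        rw [hb', Function.update_of_ne (by decide)]
        simp
      have hb'B : InBidSpace (GSvals 2) b' := by
        intro k
        rcases fin2_or k with rfl | rfl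
        · rw [hb'0]; exact hgb1
        · rw [hb'1]; exact hbi'
      have hutil_b :
          util M (![unitDemand ![2 - ε, d], unitDemand ![d, 2 - ε]] 1) 1 ![gB1 γ, gB2 γ] = d := by
        unfold util
        rw [halloc.2, hpayb]
        simp only [Matrix.cons_val_one, Matrix.head_cons, Matrix.cons_val_zero]
        rw [unitDemand_singleton]
        simp
      rw [hutil_b]
      set X := M.alloc b' 1 with hXdef
      have hXY : Disjoint (M.alloc b' 0) X := hdisj b' hb'B 0 1 (by decide)
      have hpays := hPay b' hb'B 1
      have hprice_nonneg : ∀ j : Fin 2,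
          0 ≤ Wmult b' (fun k => if k = j then 2 else 1) - Wmult b' (fun _ => 1) := by
        intro j
        have := Wmult_mono b' (fun _ => 1) (fun k => if k = j then 2 else 1)
          (fun k => by by_cases h : k = j <;> simp [h])
        linarith
      unfold util
      simp only [Matrix.cons_val_one, Matrix.head_cons, Matrix.cons_val_zero]
      by_cases h1X : (1:Fin 2) ∈ X
      · have hWsum := hWmax b' hb'B
        rw [Fin.sum_univ_two, hb'0, hb'1] at hWsum
        have h1Y : (1:Fin 2) ∉ M.alloc b' 0 := Finset.disjoint_right.mp hXY h1X
        rw [gB1_not _ h1Y] at hWsum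
        have hup : Wmult b' (fun _ => 1) ≤ bi' X := by
          have h := Wmult_one_le_W b'
          rw [← hWsum] at h
          rw [← hXdef] at h
          linarith
        have hlo : bi' X + c ≤ Wmult b' (fun k => if k = 1 then 2 else 1) := by
          have h := le_Wmult b' (fun k => if k = 1 then 2 else 1) ![{1}, X] ?_
          · rw [Fin.sum_univ_two] at h
            simp only [Matrix.cons_val_zero, Matrix.cons_val_one, Matrix.head_cons] at h
            rw [hb'0, hb'1, gB1_mem _ (Finset.mem_singleton_self 1)] at h
            linarith
          · intro j
            rw [card_filter_fin2]
            simp only [Matrix.cons_val_zero, Matrix.cons_val_one, Matrix.head_cons]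
            rcases fin2_or j with rfl | rfl <;>
              simp [h1X, Finset.mem_singleton] <;> split_ifs <;> simp_all
        have hpay_ge : c ≤ M.pay b' 1 := by
          rw [hpays]
          have hsingle := Finset.single_le_sum
            (f := fun j => Wmult b' (fun k => if k = j then 2 else 1) - Wmult b' (fun _ => 1))
            (fun j _ => hprice_nonneg j) h1X
          have hc1' : c ≤ Wmult b' (fun k => if k = 1 then 2 else 1) - Wmult b' (fun _ => 1) := by
            linarith
          rw [← hXdef]
          linarith
        have hvX : unitDemand ![d, 2 - ε] X ≤ 2 - ε := by
          apply unitDemand_le _ _ _ (by linarith)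
          intro j _
          rcases fin2_or j with rfl | rfl <;>
            simp only [Matrix.cons_val_zero, Matrix.cons_val_one, Matrix.head_cons] <;> linarith
        rw [← hXdef]
        linarith
      · have hvX : unitDemand ![d, 2 - ε] X ≤ d := by
          apply unitDemand_le _ _ _ hd0.le
          intro j hj
          rcases fin2_or j with rfl | rfl
          · simp
          · exact absurd hj h1X
        have hpay_ge : 0 ≤ M.pay b' 1 := by
          rw [hpays]
          exact Finset.sum_nonneg fun j _ => hprice_nonneg j
        rw [← hXdef]
        linarith
  · -- exposure
    intro i
    rcases fin2_or i with rfl | rfl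
    · intro b'' hb''B hb''0
      simp only [Matrix.cons_val_zero] at hb''0 ⊢
      set X := M.alloc b'' 0 with hXdef
      have hprice0 : Wmult b'' (fun k => if k = 0 then 2 else 1) ≤ Wmult b'' (fun _ => 1) := by
        apply Wmult_le
        intro Z hZ
        have h := le_Wmult b'' (fun _ => 1) ![(Z 0).erase 0, Z 1] ?_
        · rw [Fin.sum_univ_two] at h ⊢
          simp only [Matrix.cons_val_zero, Matrix.cons_val_one, Matrix.head_cons] at h
          rw [hb''0, gB1_erase0] at h
          rw [hb''0]
          exact h
        · intro j
          rw [card_filter_fin2]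
          simp only [Matrix.cons_val_zero, Matrix.cons_val_one, Matrix.head_cons]
          have h1 := hZ 1
          rw [card_filter_fin2] at h1
          rw [if_neg (show ¬((1:Fin 2) = 0) by decide)] at h1
          have hmem : ((1:Fin 2) ∈ (Z 0).erase 0) ↔ (1:Fin 2) ∈ Z 0 := by
            rw [Finset.mem_erase]
            simp
          rcases fin2_or j with rfl | rfl
          · simp only [Finset.notMem_erase, if_false]
            split_ifs <;> simp_all
          · simp only [hmem]
            split_ifs at h1 ⊢ <;> simp_all
      have hprice1 : Wmult b'' (fun k => if k = 1 then 2 else 1) ≤ c + Wmult b'' (fun _ => 1) := by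
        apply Wmult_le
        intro Z hZ
        have h := le_Wmult b'' (fun _ => 1) ![∅, Z 1] ?_
        · rw [Fin.sum_univ_two] at h ⊢
          simp only [Matrix.cons_val_zero, Matrix.cons_val_one, Matrix.head_cons] at h
          rw [hb''0] at h ⊢
          rw [gB1_not _ (by simp)] at h
          have := gB1_le (Z 0)
          linarith
        · intro j
          rw [card_filter_fin2]
          simp only [Matrix.cons_val_zero, Matrix.cons_val_one, Matrix.head_cons,
            Finset.notMem_empty, if_false]
          split_ifs <;> simp_all
      have hpaying := hPay b'' hb''B 0
      have hpb : M.pay b'' 0 ≤ if (1:Fin 2) ∈ X then c else 0 := by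
        rw [hpaying, ← hXdef]
        calc ∑ j ∈ X, (Wmult b'' (fun k => if k = j then 2 else 1) - Wmult b'' (fun _ => 1))
            ≤ ∑ j ∈ X, (if j = 1 then c else 0) := by
              apply Finset.sum_le_sum
              intro j _
              rcases fin2_or j with rfl | rfl
              · rw [if_neg (by decide)]; linarith
              · rw [if_pos rfl]; linarith
          _ = if (1:Fin 2) ∈ X then c else 0 := Finset.sum_ite_eq' X 1 fun _ => c
      have hvnn : 0 ≤ unitDemand ![2 - ε, d] X :=
        unitDemand_nonneg _ (fun j => by
          rcases fin2_or j with rfl | rfl <;>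
            simp only [Matrix.cons_val_zero, Matrix.cons_val_one, Matrix.head_cons] <;> linarith) _
      by_cases h1X : (1:Fin 2) ∈ X
      · rw [if_pos h1X] at hpb
        have hvd : d ≤ unitDemand ![2 - ε, d] X := by
          have := le_unitDemand ![2 - ε, d] h1X
          simpa using this
        have : (1 + γ) * d ≤ (1 + γ) * unitDemand ![2 - ε, d] X :=
          mul_le_mul_of_nonneg_left hvd (by linarith)
        linarith [hcid]
      · rw [if_neg h1X] at hpb
        nlinarith
    · intro b'' hb''B hb''1
      simp only [Matrix.cons_val_one, Matrix.head_cons, Matrix.cons_val_zero] at hb''1 ⊢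
      set X := M.alloc b'' 1 with hXdef
      have hprice1 : Wmult b'' (fun k => if k = 1 then 2 else 1) ≤ Wmult b'' (fun _ => 1) := by
        apply Wmult_le
        intro Z hZ
        have h := le_Wmult b'' (fun _ => 1) ![Z 0, (Z 1).erase 1] ?_
        · rw [Fin.sum_univ_two] at h ⊢
          simp only [Matrix.cons_val_zero, Matrix.cons_val_one, Matrix.head_cons] at h
          rw [hb''1, gB2_erase1] at h
          rw [hb''1]
          exact h
        · intro j
          rw [card_filter_fin2]
          simp only [Matrix.cons_val_zero, Matrix.cons_val_one, Matrix.head_cons]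
          have h0 := hZ 0
          rw [card_filter_fin2] at h0
          rw [if_neg (show ¬((0:Fin 2) = 1) by decide)] at h0
          have hmem : ((0:Fin 2) ∈ (Z 1).erase 1) ↔ (0:Fin 2) ∈ Z 1 := by
            rw [Finset.mem_erase]
            simp
          rcases fin2_or j with rfl | rfl
          · simp only [hmem]
            split_ifs at h0 ⊢ <;> simp_all
          · simp only [Finset.notMem_erase, if_false]
            split_ifs <;> simp_all
      have hprice0 : Wmult b'' (fun k => if k = 0 then 2 else 1) ≤ c + Wmult b'' (fun _ => 1) := by
        apply Wmult_le
        intro Z hZ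
        have h := le_Wmult b'' (fun _ => 1) ![Z 0, ∅] ?_
        · rw [Fin.sum_univ_two] at h ⊢
          simp only [Matrix.cons_val_zero, Matrix.cons_val_one, Matrix.head_cons] at h
          rw [hb''1] at h ⊢
          rw [gB2_not _ (by simp)] at h
          have := gB2_le (Z 1)
          linarith
        · intro j
          rw [card_filter_fin2]
          simp only [Matrix.cons_val_zero, Matrix.cons_val_one, Matrix.head_cons,
            Finset.notMem_empty, if_false]
          split_ifs <;> simp_all
      have hpaying := hPay b'' hb''B 1
      have hpb : M.pay b'' 1 ≤ if (0:Fin 2) ∈ X then c else 0 := by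
        rw [hpaying, ← hXdef]
        calc ∑ j ∈ X, (Wmult b'' (fun k => if k = j then 2 else 1) - Wmult b'' (fun _ => 1))
            ≤ ∑ j ∈ X, (if j = 0 then c else 0) := by
              apply Finset.sum_le_sum
              intro j _
              rcases fin2_or j with rfl | rfl
              · rw [if_pos rfl]; linarith
              · rw [if_neg (by decide)]; linarith
          _ = if (0:Fin 2) ∈ X then c else 0 := Finset.sum_ite_eq' X 0 fun _ => c
      have hvnn : 0 ≤ unitDemand ![d, 2 - ε] X :=
        unitDemand_nonneg _ (fun j => by
          rcases fin2_or j with rfl | rfl <;>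
            simp only [Matrix.cons_val_zero, Matrix.cons_val_one, Matrix.head_cons] <;> linarith) _
      by_cases h0X : (0:Fin 2) ∈ X
      · rw [if_pos h0X] at hpb
        have hvd : d ≤ unitDemand ![d, 2 - ε] X := by
          have := le_unitDemand ![d, 2 - ε] h0X
          simpa using this
        have : (1 + γ) * d ≤ (1 + γ) * unitDemand ![d, 2 - ε] X :=
          mul_le_mul_of_nonneg_left hvd (by linarith)
        linarith [hcid]
      · rw [if_neg h0X] at hpb
        nlinarith [mul_nonneg (show (0:ℝ) ≤ 1 + γ by linarith) hvnn]
  · -- welfare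
    rw [Fin.sum_univ_two, halloc.1, halloc.2]
    simp only [Matrix.cons_val_zero, Matrix.cons_val_one, Matrix.head_cons]
    rw [unitDemand_singleton, unitDemand_singleton]
    simp only [Matrix.cons_val_zero, Matrix.cons_val_one, Matrix.head_cons]
    rw [hd_def]; ring
  · -- OPT
    rw [OPT]
    apply le_antisymm
    · apply W_le
      intro X _ _
      rw [Fin.sum_univ_two]
      simp only [Matrix.cons_val_zero, Matrix.cons_val_one, Matrix.head_cons]
      have hv0 : unitDemand ![2 - ε, d] (X 0) ≤ 2 - ε := by
        apply unitDemand_le _ _ _ (by linarith)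
        intro j _
        rcases fin2_or j with rfl | rfl <;>
          simp only [Matrix.cons_val_zero, Matrix.cons_val_one, Matrix.head_cons] <;> linarith
      have hv1 : unitDemand ![d, 2 - ε] (X 1) ≤ 2 - ε := by
        apply unitDemand_le _ _ _ (by linarith)
        intro j _
        rcases fin2_or j with rfl | rfl <;>
          simp only [Matrix.cons_val_zero, Matrix.cons_val_one, Matrix.head_cons] <;> linarith
      linarith
    · have h := le_W ![unitDemand ![2 - ε, d], unitDemand ![d, 2 - ε]] Finset.univ ![{0}, {1}]
        (disj2 _ (by simp)) fun i => Finset.subset_univ _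
      rw [Fin.sum_univ_two] at h
      simp only [Matrix.cons_val_zero, Matrix.cons_val_one, Matrix.head_cons] at h
      rw [unitDemand_singleton, unitDemand_singleton] at h
      simp only [Matrix.cons_val_zero, Matrix.cons_val_one, Matrix.head_cons] at h
      linarith
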